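/- Let g be a 2-step nilpotent real Lie algebra with a left-invariant Strominger Kähler-like structure given by an orthonormal basis {ε_i}_{i=1}^{2n} with Jε_i = ε_{n+i} and only nonzero brackets [ε_i, ε_{n+i}] = λ_i x_i (i = 1,…,s, λ_i > 0, {x_i} orthonormal in [g,g]). For any diagonal J-invariant metric h = Σ a_k ((ε^k)² + (ε^{n+k})²) with a_k > 0, the Bismut Ricci form ρ^B_h(x,y) = (1/2) Σ_{k=1}^s (1/a_k) h([ε_k, ε_{n+k}], [x,y]) is diagonal in the basis {ε^k ∧ ε^{n+k}}, i.e. ρ^B_h = Σ_{k=1}^s b_k ε^k ∧ ε^{n+k} for some reals b_k. -/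

import Mathlib

/-- For a diagonal metric `h` on a 2-step nilpotent Lie algebra with
the Strominger Kähler-like basis structure, the Bismut Ricci form
`ρ^B_h(u,v) = (1/2) Σ_k (1/a_k) h([ε_k,ε_{n+k}],[u,v])` is diagonal, i.e. a
combination of the forms `ε^k ∧ ε^{n+k}`. -/
theorem bismut_ricci_diagonal
    {L : Type*} [LieRing L] [LieAlgebra ℝ L]
    {n s : ℕ} (hs : s ≤ n)
    (b : Module.Basis (Fin n ⊕ Fin n) ℝ L)
    (J : L →ₗ[ℝ] L)
    (hJl : ∀ i : Fin n, J (b (Sum.inl i)) = b (Sum.inr i))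
    (hJr : ∀ i : Fin n, J (b (Sum.inr i)) = -b (Sum.inl i))
    (lam : Fin s → ℝ) (hlam : ∀ k, 0 < lam k)
    (x : Fin s → L)
    (hcentral : ∀ (k : Fin s) (z : L), ⁅x k, z⁆ = 0)
    (hbr : ∀ k : Fin s,
      ⁅b (Sum.inl (Fin.castLE hs k)), b (Sum.inr (Fin.castLE hs k))⁆ = lam k • x k)
    (hbr_ll : ∀ i j : Fin n, ⁅b (Sum.inl i), b (Sum.inl j)⁆ = (0 : L))
    (hbr_rr : ∀ i j : Fin n, ⁅b (Sum.inr i), b (Sum.inr j)⁆ = (0 : L))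
    (hbr_lr : ∀ i j : Fin n, i ≠ j ∨ s ≤ (i : ℕ) →
      ⁅b (Sum.inl i), b (Sum.inr j)⁆ = (0 : L))
    (a : Fin n → ℝ) (ha : ∀ k, 0 < a k)
    (h : L →ₗ[ℝ] L →ₗ[ℝ] ℝ)
    (hsymm : ∀ u v : L, h u v = h v u)
    (hdiag : ∀ i j : Fin n ⊕ Fin n,
      h (b i) (b j) = if i = j then Sum.elim a a i else 0)
    (ρ : L → L → ℝ)
    (hρ : ∀ u v : L, ρ u v = (1 / 2) * ∑ k : Fin s, (1 / a (Fin.castLE hs k)) *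
      h ⁅b (Sum.inl (Fin.castLE hs k)), b (Sum.inr (Fin.castLE hs k))⁆ ⁅u, v⁆) :
    ∃ c : Fin s → ℝ, ∀ u v : L, ρ u v = ∑ k : Fin s,
      c k * (b.coord (Sum.inl (Fin.castLE hs k)) u * b.coord (Sum.inr (Fin.castLE hs k)) v
        - b.coord (Sum.inl (Fin.castLE hs k)) v * b.coord (Sum.inr (Fin.castLE hs k)) u) := by
  classical
  set w : Fin s → L := fun k => lam k • x k with hw
  set G : L →ₗ[ℝ] L →ₗ[ℝ] L := ∑ k : Fin s,
      ((b.coord (Sum.inl (Fin.castLE hs k))).smulRight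
          ((b.coord (Sum.inr (Fin.castLE hs k))).smulRight (w k))
        - (b.coord (Sum.inr (Fin.castLE hs k))).smulRight
          ((b.coord (Sum.inl (Fin.castLE hs k))).smulRight (w k))) with hG
  have hGapp : ∀ u v : L, G u v = ∑ k : Fin s,
      (b.coord (Sum.inl (Fin.castLE hs k)) u * b.coord (Sum.inr (Fin.castLE hs k)) v
        - b.coord (Sum.inl (Fin.castLE hs k)) v * b.coord (Sum.inr (Fin.castLE hs k)) u) • w k := by
    intro u v
    simp only [hG, LinearMap.sum_apply, LinearMap.sub_apply, LinearMap.smul_apply,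
      LinearMap.smulRight_apply, smul_smul]
    refine Finset.sum_congr rfl fun k _ => ?_
    rw [← sub_smul]
    congr 1
    ring
  have hcoord : ∀ i j : Fin n ⊕ Fin n, b.coord i (b j) = if j = i then 1 else 0 := by
    intro i j
    simp [Module.Basis.coord_apply, Module.Basis.repr_self, Finsupp.single_apply]
  have key : ∀ u v : L, ⁅u, v⁆ = G u v := by
    have main : (LieModule.toEnd ℝ L L : L →ₗ[ℝ] Module.End ℝ L) = G := by
      apply b.ext; intro i; apply b.ext; intro j
      have hGij : G (b i) (b j) = ∑ k : Fin s,
          ((if i = Sum.inl (Fin.castLE hs k) then (1:ℝ) else 0) *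
            (if j = Sum.inr (Fin.castLE hs k) then 1 else 0)
          - (if j = Sum.inl (Fin.castLE hs k) then (1:ℝ) else 0) *
            (if i = Sum.inr (Fin.castLE hs k) then 1 else 0)) • w k := by
        rw [hGapp]; refine Finset.sum_congr rfl fun k _ => ?_
        rw [hcoord, hcoord, hcoord, hcoord]
      have hL : (LieModule.toEnd ℝ L L : L →ₗ[ℝ] Module.End ℝ L) (b i) (b j) = ⁅b i, b j⁆ := rfl
      rw [hL, hGij]
      rcases i with i | i <;> rcases j with j | j
      · rw [hbr_ll]
        refine (Finset.sum_eq_zero fun k _ => ?_).symm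
        simp
      · -- ⁅inl i, inr j⁆
        by_cases hij : i = j ∧ (i : ℕ) < s
        · obtain ⟨rfl, hilt⟩ := hij
          have hci : Fin.castLE hs (⟨(i : ℕ), hilt⟩ : Fin s) = i := rfl
          rw [Finset.sum_eq_single (⟨(i : ℕ), hilt⟩ : Fin s)]
          · have hb := hbr ⟨(i : ℕ), hilt⟩
            rw [hci] at hb
            rw [hb]
            simp [hci, w]
          · intro k _ hk
            have hik : ¬ i = Fin.castLE hs k := fun hh =>
              hk (Fin.ext (congrArg Fin.val hh).symm)
            simp [hik]
          · simp
        · have hz : ⁅b (Sum.inl i), b (Sum.inr j)⁆ = 0 := by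
            apply hbr_lr
            by_cases hij2 : i = j
            · right; subst hij2; omega
            · left; exact hij2
          rw [hz]
          refine (Finset.sum_eq_zero fun k _ => ?_).symm
          have h1 : ¬ (i = Fin.castLE hs k ∧ j = Fin.castLE hs k) := fun ⟨hik, hjk⟩ =>
            hij ⟨hik.trans hjk.symm, by rw [hik]; exact k.isLt⟩
          by_cases h2 : i = Fin.castLE hs k
          · have h3 : ¬ j = Fin.castLE hs k := fun hj => h1 ⟨h2, hj⟩
            simp [h2, h3]
          · simp [h2]
      · -- ⁅inr i, inl j⁆
        rw [show ⁅b (Sum.inr i), b (Sum.inl j)⁆ = -⁅b (Sum.inl j), b (Sum.inr i)⁆ by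
          rw [← lie_skew]]
        by_cases hij : j = i ∧ (j : ℕ) < s
        · obtain ⟨rfl, hjlt⟩ := hij
          have hcj : Fin.castLE hs (⟨(j : ℕ), hjlt⟩ : Fin s) = j := rfl
          rw [Finset.sum_eq_single (⟨(j : ℕ), hjlt⟩ : Fin s)]
          · have hb := hbr ⟨(j : ℕ), hjlt⟩
            rw [hcj] at hb
            rw [hb]
            simp [hcj, w]
          · intro k _ hk
            have hjk : ¬ j = Fin.castLE hs k := fun hh =>
              hk (Fin.ext (congrArg Fin.val hh).symm)
            simp [hjk]
          · simp
        · have hz : ⁅b (Sum.inl j), b (Sum.inr i)⁆ = 0 := by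
            apply hbr_lr
            by_cases hij2 : j = i
            · right; subst hij2; omega
            · left; exact hij2
          rw [hz, neg_zero]
          refine (Finset.sum_eq_zero fun k _ => ?_).symm
          have h1 : ¬ (j = Fin.castLE hs k ∧ i = Fin.castLE hs k) := fun ⟨hjk, hik⟩ =>
            hij ⟨hjk.trans hik.symm, by rw [hjk]; exact k.isLt⟩
          by_cases h2 : j = Fin.castLE hs k
          · have h3 : ¬ i = Fin.castLE hs k := fun hi => h1 ⟨h2, hi⟩
            simp [h2, h3]
          · simp [h2]
      · rw [hbr_rr]
        refine (Finset.sum_eq_zero fun k _ => ?_).symm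
        simp
    intro u v
    calc ⁅u, v⁆ = (LieModule.toEnd ℝ L L : L →ₗ[ℝ] Module.End ℝ L) u v := rfl
      _ = G u v := by rw [main]
  refine ⟨fun k => ∑ j : Fin s, (1 / 2) * (1 / a (Fin.castLE hs j)) * h (w j) (w k), ?_⟩
  intro u v
  rw [hρ]
  simp only [hbr, key, hGapp, hw, map_sum, map_smul, LinearMap.smul_apply, smul_eq_mul,
    Finset.mul_sum]
  rw [Finset.sum_comm]
  refine Finset.sum_congr rfl fun k _ => ?_
  rw [Finset.sum_mul]
  refine Finset.sum_congr rfl fun j _ => ?_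
  ring
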